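/- Let m ≥ 3 be an integer and C a real number. For each t ∈ {−1, (m²−2m)/(m²+4)}, the function β : ℝ^{m+1} → ℝ given by β(x₁,…,x_m,z) = (Σᵢ₌₁^m xᵢ + z + C)^t satisfies, at every point of the region {Σᵢ₌₁^m xᵢ + z + C > 0}, the equation Σᵢ₌₁^m (β·∂ᵢ∂ᵢβ − m·(∂ᵢβ)²) + m·(β·∂_z∂_zβ − 2·(∂_zβ)²) + ((m−2)/(2·∂_zβ))·Σᵢ₌₁^m (β²·∂ᵢ∂ᵢ∂_zβ − (m−2)·β·∂ᵢβ·∂ᵢ∂_zβ) + ((m−2)(m−4)/(4·(∂_zβ)²))·Σᵢ₌₁^m β²·(∂ᵢ∂_zβ)² = 0. -/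

import Mathlib

noncomputable def pd {n : ℕ} (i : Fin n) (f : (Fin n → ℝ) → ℝ) : (Fin n → ℝ) → ℝ :=
  fun x => deriv (fun s : ℝ => f (Function.update x i s)) (x i)

lemma sum_update' (m : ℕ) (x : Fin (m+1) → ℝ) (i : Fin (m+1)) (s : ℝ) :
    (∑ j, Function.update x i s j) = (∑ j, x j) - x i + s := by
  rw [Finset.sum_update_of_mem (Finset.mem_univ i),
      Finset.sum_sdiff_eq_sub (Finset.subset_univ {i}), Finset.sum_singleton]
  ring

lemma pd_aux (m : ℕ) (C k a : ℝ) (g : (Fin (m+1) → ℝ) → ℝ)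
    (hg : ∀ x : Fin (m+1) → ℝ, 0 < (∑ j, x j) + C → g x = k * ((∑ j, x j) + C) ^ a)
    (i : Fin (m+1)) (x : Fin (m+1) → ℝ) (hx : 0 < (∑ j, x j) + C) :
    pd i g x = k * a * ((∑ j, x j) + C) ^ (a - 1) := by
  set c : ℝ := (∑ j, x j) + C - x i with hc
  have hxc : 0 < x i + c := by rw [hc]; linarith
  have hev : (fun s => g (Function.update x i s)) =ᶠ[nhds (x i)]
      fun s => k * (s + c) ^ a := by
    filter_upwards [Ioi_mem_nhds (show -c < x i by linarith)] with s hs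
    have h1 : (∑ j, Function.update x i s j) + C = s + c := by
      rw [sum_update' m x i s]; rw [hc]; ring
    have hs' : (0:ℝ) < s + c := by have := Set.mem_Ioi.mp hs; linarith
    rw [hg _ (by rw [h1]; exact hs'), h1]
  have hd : HasDerivAt (fun s : ℝ => k * (s + c) ^ a)
      (k * (a * (x i + c) ^ (a - 1) * 1)) (x i) := by
    exact ((Real.hasDerivAt_rpow_const (Or.inl (ne_of_gt hxc))).comp (x i)
      ((hasDerivAt_id (x i)).add_const c)).const_mul k
  have : pd i g x = deriv (fun s : ℝ => g (Function.update x i s)) (x i) := rfl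
  rw [this, hev.deriv_eq, hd.deriv]
  have h2 : x i + c = (∑ j, x j) + C := by rw [hc]; ring
  rw [h2]; ring

theorem stmt6 (m : ℕ) (hm : 3 ≤ m) (C : ℝ) (t : ℝ)
    (ht : t = -1 ∨ t = ((m : ℝ) ^ 2 - 2 * (m : ℝ)) / ((m : ℝ) ^ 2 + 4))
    (β : (Fin (m + 1) → ℝ) → ℝ)
    (hβ : ∀ x : Fin (m + 1) → ℝ,
      0 < (∑ i : Fin m, x i.castSucc) + x (Fin.last m) + C →
      β x = ((∑ i : Fin m, x i.castSucc) + x (Fin.last m) + C) ^ t) :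
    ∀ x : Fin (m + 1) → ℝ,
      0 < (∑ i : Fin m, x i.castSucc) + x (Fin.last m) + C →
      (∑ i : Fin m,
          (β x * pd i.castSucc (pd i.castSucc β) x - (m : ℝ) * (pd i.castSucc β x) ^ 2))
        + (m : ℝ) *
            (β x * pd (Fin.last m) (pd (Fin.last m) β) x - 2 * (pd (Fin.last m) β x) ^ 2)
        + (((m : ℝ) - 2) / (2 * pd (Fin.last m) β x)) *
            (∑ i : Fin m,
              ((β x) ^ 2 * pd i.castSucc (pd i.castSucc (pd (Fin.last m) β)) x
                - ((m : ℝ) - 2) * β x * pd i.castSucc β x *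
                    pd i.castSucc (pd (Fin.last m) β) x))
        + (((m : ℝ) - 2) * ((m : ℝ) - 4) / (4 * (pd (Fin.last m) β x) ^ 2)) *
            (∑ i : Fin m, (β x) ^ 2 * (pd i.castSucc (pd (Fin.last m) β) x) ^ 2)
      = 0 := by
  intro x hx
  have hsum : ∀ y : Fin (m+1) → ℝ,
      (∑ j, y j) = (∑ i : Fin m, y i.castSucc) + y (Fin.last m) :=
    fun y => Fin.sum_univ_castSucc y
  have hβ' : ∀ y : Fin (m+1) → ℝ, 0 < (∑ j, y j) + C →
      β y = 1 * ((∑ j, y j) + C) ^ t := by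
    intro y hy
    rw [one_mul, hsum y] at *
    exact hβ y hy
  have hx' : 0 < (∑ j, x j) + C := by rw [hsum x]; exact hx
  have L1 : ∀ (i : Fin (m+1)) (y : Fin (m+1) → ℝ), 0 < (∑ j, y j) + C →
      pd i β y = 1 * t * ((∑ j, y j) + C) ^ (t - 1) :=
    fun i => pd_aux m C 1 t β hβ' i
  have L2 : ∀ (i j : Fin (m+1)) (y : Fin (m+1) → ℝ), 0 < (∑ j, y j) + C →
      pd i (pd j β) y = 1 * t * (t - 1) * ((∑ j, y j) + C) ^ (t - 1 - 1) :=
    fun i j => pd_aux m C (1 * t) (t - 1) (pd j β) (L1 j) i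
  have L3 : ∀ (i j k : Fin (m+1)) (y : Fin (m+1) → ℝ), 0 < (∑ j, y j) + C →
      pd i (pd j (pd k β)) y
        = 1 * t * (t - 1) * (t - 1 - 1) * ((∑ j, y j) + C) ^ (t - 1 - 1 - 1) :=
    fun i j k => pd_aux m C (1 * t * (t - 1)) (t - 1 - 1) (pd j (pd k β)) (L2 j k) i
  set v : ℝ := (∑ j, x j) + C with hv
  have hv0 : 0 < v := hx'
  clear_value v
  have hsplit : ∀ r : ℝ, v ^ (r + 1) = v ^ r * v := fun r => by
    rw [Real.rpow_add hv0, Real.rpow_one]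
  set w : ℝ := v ^ (t - 3) with hw
  have hw0 : 0 < w := Real.rpow_pos_of_pos hv0 _
  clear_value w
  have hp : 0 < (∑ j, x j) + C := by rw [← hv]; exact hv0
  have hb : β x = w * (v * v * v) := by
    rw [hβ' x hp, ← hv, one_mul, show t = (t-3) + 1 + 1 + 1 by ring, hsplit, hsplit, hsplit, ← hw]
    ring
  have hB : ∀ i : Fin (m+1), pd i β x = t * w * (v * v) := by
    intro i
    rw [L1 i x hp, ← hv, show t - 1 = (t-3) + 1 + 1 by ring, hsplit, hsplit, ← hw]
    ring
  have hD : ∀ i j : Fin (m+1), pd i (pd j β) x = t * (t - 1) * w * v := by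
    intro i j
    rw [L2 i j x hp, ← hv, show t - 1 - 1 = (t-3) + 1 by ring, hsplit, ← hw]
    ring
  have hE : ∀ i j k : Fin (m+1), pd i (pd j (pd k β)) x = t * (t - 1) * (t - 2) * w := by
    intro i j k
    rw [L3 i j k x hp, ← hv, show t - 1 - 1 - 1 = t - 3 by ring, ← hw]
    ring
  have ht0 : t ≠ 0 := by
    have hm' : (3:ℝ) ≤ (m:ℝ) := by exact_mod_cast hm
    rcases ht with h | h
    · rw [h]; norm_num
    · rw [h]
      have h1 : (0:ℝ) < (m:ℝ)^2 - 2*m := by nlinarith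
      have h2 : (0:ℝ) < (m:ℝ)^2 + 4 := by positivity
      positivity
  have hQ : ((m:ℝ)^2 + 4) * t^2 + (2*(m:ℝ) + 4) * t + (2*(m:ℝ) - (m:ℝ)^2) = 0 := by
    have hm' : (3:ℝ) ≤ (m:ℝ) := by exact_mod_cast hm
    have h2 : ((m:ℝ)^2 + 4) ≠ 0 := by positivity
    rcases ht with h | h
    · rw [h]; ring
    · rw [h]; field_simp; ring
  have hvne : v ≠ 0 := ne_of_gt hv0
  have hwne : w ≠ 0 := ne_of_gt hw0
  simp only [hb, hB, hD, hE, Finset.sum_const, Finset.card_univ, Fintype.card_fin,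
    nsmul_eq_mul]
  field_simp
  linear_combination (-2*(m:ℝ)*w^2*v^4) * hQ
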